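/- Over F_2, with H = [[I, I, I],[I, P, Q]] as above, if P and Q are strongly noncommutative permutation matrices (PQ and QP differ in every column), then for every nonzero vector x of Hamming weight 1, the vector c = ((P+Q)x ; (I+Q)x ; (I+P)x) is not a codeword of the code defined by H (i.e., H·c ≠ 0). -/
import Mathlib


/-- A permutation matrix over a ring `R`. -/
def IsPermMatrix {n : Type*} [Fintype n] [DecidableEq n] {R : Type*} [Semiring R]
    (M : Matrix n n R) : Prop :=
  ∃ σ : Equiv.Perm n, M = σ.permMatrix R

/-- Over `F_2`, with `H = [[I,I,I],[I,P,Q]]` for strongly noncommutative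
permutation matrices `P, Q`, and `x` of Hamming weight 1, the vector
`c = ((P+Q)x ; (I+Q)x ; (I+P)x)` is not a codeword: `H·c ≠ 0`. -/
theorem near_codeword_not_codeword (N : ℕ)
    (P Q : Matrix (Fin N) (Fin N) (ZMod 2))
    (hP : IsPermMatrix P) (hQ : IsPermMatrix Q)
    (hsnc : ∀ j : Fin N, ∃ i : Fin N, (P * Q) i j ≠ (Q * P) i j)
    (x : Fin N → ZMod 2) (hx : ∃ j : Fin N, x = Pi.single j 1) :
    let H : Matrix (Fin N ⊕ Fin N) (Fin N ⊕ (Fin N ⊕ Fin N)) (ZMod 2) :=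
      Matrix.of fun i j =>
        match i, j with
        | Sum.inl a, Sum.inl b => (1 : Matrix (Fin N) (Fin N) (ZMod 2)) a b
        | Sum.inl a, Sum.inr (Sum.inl b) => (1 : Matrix (Fin N) (Fin N) (ZMod 2)) a b
        | Sum.inl a, Sum.inr (Sum.inr b) => (1 : Matrix (Fin N) (Fin N) (ZMod 2)) a b
        | Sum.inr a, Sum.inl b => (1 : Matrix (Fin N) (Fin N) (ZMod 2)) a b
        | Sum.inr a, Sum.inr (Sum.inl b) => P a b
        | Sum.inr a, Sum.inr (Sum.inr b) => Q a b
    let c : Fin N ⊕ (Fin N ⊕ Fin N) → ZMod 2 :=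
      Sum.elim ((P + Q).mulVec x)
        (Sum.elim ((1 + Q).mulVec x) ((1 + P).mulVec x))
    H.mulVec c ≠ 0 := by
  obtain ⟨j, rfl⟩ := hx
  obtain ⟨i, hi⟩ := hsnc j
  intro H c hc
  apply hi
  have h := congrFun hc (Sum.inr i)
  simp only [H, c, Matrix.mulVec, dotProduct, Fintype.sum_sum_type,
    Sum.elim_inl, Sum.elim_inr, Matrix.of_apply, Matrix.add_apply, Matrix.one_apply,
    Pi.single_apply, mul_ite, ite_mul, mul_one, mul_zero, one_mul, zero_mul,
    Finset.sum_ite_eq, Finset.sum_ite_eq', Finset.mem_univ, if_true, mul_add, add_mul,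
    Finset.sum_add_distrib, Pi.zero_apply] at h
  rw [← Matrix.mul_apply, ← Matrix.mul_apply] at h
  have two : (2 : ZMod 2) = 0 := rfl
  have hz : (P * Q) i j + (Q * P) i j = 0 := by
    linear_combination h - (P i j + Q i j) * two
  have := add_eq_zero_iff_eq_neg.mp hz
  simpa [CharTwo.neg_eq] using this
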